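/- arXiv:1208.6173 — 2 statements merged into one kernel-verified Lean document; each statement's English description precedes it below -/
import Mathlib

section
/- Let h ≥ 0 and let π be a permutation of {1,…,h}. Let β be the join of the join-congruences cg(1,π(1)), …, cg(h,π(h)) of the grid K_{h,h}. Then the number of equivalence classes of β equals h + 1 + inv(π). -/
/-- The grid `K_{m,n}`: the lattice `{0,…,m} × {0,…,n}` ordered componentwise
(join and meet are componentwise max and min). -/
abbrev Grid (m n : ℕ) := Fin (m + 1) × Fin (n + 1)

/-- A join-congruence of a join-semilattice: an equivalence relation compatible with
joining a fixed element. -/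
def IsJoinCong {α : Type*} [SemilatticeSup α] (r : α → α → Prop) : Prop :=
  Equivalence r ∧ ∀ a b c : α, r a b → r (a ⊔ c) (b ⊔ c)

/-- The join-congruence generated by a relation `R`: the smallest join-congruence
containing `R` (the intersection of all join-congruences containing `R`). -/
def joinCongGen {α : Type*} [SemilatticeSup α] (R : α → α → Prop) : α → α → Prop :=
  fun a b => ∀ r : α → α → Prop, IsJoinCong r → (∀ x y, R x y → r x y) → r a b

/-- The join of a family of join-congruences: the smallest join-congruence containing
all members of the family. -/
def joinCongSup {α : Type*} [SemilatticeSup α] {ι : Sort*} (f : ι → α → α → Prop) :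
    α → α → Prop :=
  joinCongGen fun a b => ∃ i, f i a b

open Fin.NatCast

/-- For `1 ≤ i ≤ m` and `1 ≤ j ≤ n`, the join-congruence `cg(i,j)` of the grid `K_{m,n}`
generated by the pairs `((i,j−1),(i,j))` and `((i−1,j),(i,j))`. -/
def cg (m n i j : ℕ) : Grid m n → Grid m n → Prop :=
  joinCongGen fun a b =>
    b = ((i : Fin (m + 1)), (j : Fin (n + 1))) ∧
      (a = ((i : Fin (m + 1)), ((j - 1 : ℕ) : Fin (n + 1))) ∨
        a = (((i - 1 : ℕ) : Fin (m + 1)), (j : Fin (n + 1))))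

/-- The number of inversions of a permutation of `{1,…,h}` (represented as `Fin h`). -/
def invNum {h : ℕ} (π : Equiv.Perm (Fin h)) : ℕ :=
  (Finset.univ.filter fun p : Fin h × Fin h => p.1 < p.2 ∧ π p.2 < π p.1).card

section Aux
variable {α : Type*} [SemilatticeSup α]

theorem isJoinCong_joinCongGen (R : α → α → Prop) : IsJoinCong (joinCongGen R) := by
  refine ⟨⟨?_, ?_, ?_⟩, ?_⟩
  · intro a r hr _; exact hr.1.refl a
  · intro a b hab r hr hR; exact hr.1.symm (hab r hr hR)
  · intro a b c hab hbc r hr hR; exact hr.1.trans (hab r hr hR) (hbc r hr hR)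
  · intro a b c hab r hr hR; exact hr.2 a b c (hab r hr hR)

theorem mem_joinCongGen {R : α → α → Prop} {a b} (hab : R a b) : joinCongGen R a b :=
  fun _ _ hR => hR a b hab

end Aux

section Main
variable (h : ℕ) (π : Equiv.Perm (Fin h))

def gridBeta : Grid h h → Grid h h → Prop :=
  joinCongSup fun s : Fin h => cg h h (s.val + 1) ((π s).val + 1)

theorem isJoinCong_beta : IsJoinCong (gridBeta h π) := isJoinCong_joinCongGen _

theorem beta_gen1 (s : Fin h) :
    gridBeta h π (((s.val + 1 : ℕ) : Fin (h + 1)), (((π s).val : ℕ) : Fin (h + 1)))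
      (((s.val + 1 : ℕ) : Fin (h + 1)), (((π s).val + 1 : ℕ) : Fin (h + 1))) :=
  mem_joinCongGen ⟨s, mem_joinCongGen ⟨rfl, Or.inl (by norm_num)⟩⟩

theorem beta_gen2 (s : Fin h) :
    gridBeta h π (((s.val : ℕ) : Fin (h + 1)), (((π s).val + 1 : ℕ) : Fin (h + 1)))
      (((s.val + 1 : ℕ) : Fin (h + 1)), (((π s).val + 1 : ℕ) : Fin (h + 1))) :=
  mem_joinCongGen ⟨s, mem_joinCongGen ⟨rfl, Or.inr (by norm_num)⟩⟩

theorem beta_up_col (u : Grid h h) (t : Fin h) (ht : (t : ℕ) = u.2.val)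
    (hx : ((π.symm t : Fin h) : ℕ) + 1 ≤ u.1.val) :
    gridBeta h π u (u.1, (((t : ℕ) + 1 : ℕ) : Fin (h + 1))) := by
  have hgen := (isJoinCong_beta h π).2 _ _ u (beta_gen1 h π (π.symm t))
  rw [Equiv.apply_symm_apply] at hgen
  have hs1 : ((π.symm t : Fin h) : ℕ) + 1 < h + 1 := by omega
  have ht1 : (t : ℕ) < h + 1 := by omega
  have ht2 : (t : ℕ) + 1 < h + 1 := by omega
  have e1 : ((((π.symm t : Fin h) : ℕ) + 1 : ℕ) : Fin (h+1)) ⊔ u.1 = u.1 := by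
    apply sup_eq_right.mpr
    rw [Fin.le_def, Fin.val_cast_of_lt hs1]; exact hx
  have e2 : (((t : ℕ) : ℕ) : Fin (h+1)) ⊔ u.2 = u.2 := by
    apply sup_eq_right.mpr
    rw [Fin.le_def, Fin.val_cast_of_lt ht1]; omega
  have e3 : (((t : ℕ) + 1 : ℕ) : Fin (h+1)) ⊔ u.2 = (((t : ℕ) + 1 : ℕ) : Fin (h+1)) := by
    apply sup_eq_left.mpr
    rw [Fin.le_def, Fin.val_cast_of_lt ht2]; omega
  have hA : (((((π.symm t : Fin h) : ℕ) + 1 : ℕ) : Fin (h+1)), (((t : ℕ) : ℕ) : Fin (h+1))) ⊔ u = u := by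
    rw [Prod.sup_def]; rw [e1, e2]
  have hB : (((((π.symm t : Fin h) : ℕ) + 1 : ℕ) : Fin (h+1)), (((t : ℕ) + 1 : ℕ) : Fin (h+1))) ⊔ u
      = (u.1, (((t : ℕ) + 1 : ℕ) : Fin (h+1))) := by
    rw [Prod.sup_def]; rw [e1, e3]
  rw [hA, hB] at hgen
  exact hgen

theorem beta_up_row (u : Grid h h) (s : Fin h) (hs : (s : ℕ) = u.1.val)
    (hy : ((π s : Fin h) : ℕ) + 1 ≤ u.2.val) :
    gridBeta h π u ((((s : ℕ) + 1 : ℕ) : Fin (h + 1)), u.2) := by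
  have hgen := (isJoinCong_beta h π).2 _ _ u (beta_gen2 h π s)
  have hp1 : ((π s : Fin h) : ℕ) + 1 < h + 1 := by omega
  have hs1 : (s : ℕ) < h + 1 := by omega
  have hs2 : (s : ℕ) + 1 < h + 1 := by omega
  have e1 : (((π s : Fin h) : ℕ) + 1 : ℕ) • (1 : ℕ) = 0 ∨ True := by right; trivial
  have f1 : ((((π s : Fin h) : ℕ) + 1 : ℕ) : Fin (h+1)) ⊔ u.2 = u.2 := by
    apply sup_eq_right.mpr
    rw [Fin.le_def, Fin.val_cast_of_lt hp1]; exact hy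
  have f2 : (((s : ℕ) : ℕ) : Fin (h+1)) ⊔ u.1 = u.1 := by
    apply sup_eq_right.mpr
    rw [Fin.le_def, Fin.val_cast_of_lt hs1]; omega
  have f3 : (((s : ℕ) + 1 : ℕ) : Fin (h+1)) ⊔ u.1 = (((s : ℕ) + 1 : ℕ) : Fin (h+1)) := by
    apply sup_eq_left.mpr
    rw [Fin.le_def, Fin.val_cast_of_lt hs2]; omega
  have hA : ((((s : ℕ) : ℕ) : Fin (h+1)), ((((π s : Fin h) : ℕ) + 1 : ℕ) : Fin (h+1))) ⊔ u = u := by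
    rw [Prod.sup_def]; rw [f1, f2]
  have hB : ((((s : ℕ) + 1 : ℕ) : Fin (h+1)), ((((π s : Fin h) : ℕ) + 1 : ℕ) : Fin (h+1))) ⊔ u
      = ((((s : ℕ) + 1 : ℕ) : Fin (h+1)), u.2) := by
    rw [Prod.sup_def]; rw [f1, f3]
  rw [hA, hB] at hgen
  exact hgen

theorem beta_refl (a) : gridBeta h π a a := (isJoinCong_beta h π).1.refl a
theorem beta_symm {a b} : gridBeta h π a b → gridBeta h π b a := (isJoinCong_beta h π).1.symm
theorem beta_trans {a b c} : gridBeta h π a b → gridBeta h π b c → gridBeta h π a c :=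
  (isJoinCong_beta h π).1.trans

theorem beta_sup_self {a b c} (hb : gridBeta h π a b) (hc : gridBeta h π a c) :
    gridBeta h π a (b ⊔ c) := by
  have h1 : gridBeta h π (a ⊔ c) (b ⊔ c) := (isJoinCong_beta h π).2 _ _ c hb
  have h2 : gridBeta h π (a ⊔ a) (c ⊔ a) := (isJoinCong_beta h π).2 _ _ a hc
  rw [sup_idem, sup_comm] at h2
  exact beta_trans h π h2 h1

open Classical in
noncomputable def gridCls (a : Grid h h) : Finset (Grid h h) :=
  Finset.univ.filter fun b => gridBeta h π a b

theorem mem_cls {a b} : b ∈ gridCls h π a ↔ gridBeta h π a b := by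
  simp [gridCls]

noncomputable def gridMx (a : Grid h h) : Grid h h :=
  (gridCls h π a).sup' ⟨a, (mem_cls h π).mpr (beta_refl h π a)⟩ id

theorem beta_mx (a) : gridBeta h π a (gridMx h π a) := by
  have : gridMx h π a ∈ {x | gridBeta h π a x} :=
    Finset.sup'_mem {x | gridBeta h π a x}
      (fun x hx y hy => beta_sup_self h π hx hy) _ _ id
      (fun i hi => (mem_cls h π).mp hi)
  exact this

theorem le_mx {a b} (hb : gridBeta h π a b) : b ≤ gridMx h π a :=
  Finset.le_sup' id ((mem_cls h π).mpr hb)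

theorem mx_eq {a b} (hab : gridBeta h π a b) : gridMx h π a = gridMx h π b := by
  apply le_antisymm
  · exact le_mx h π (beta_trans h π (beta_symm h π hab) (beta_mx h π a))
  · exact le_mx h π (beta_trans h π hab (beta_mx h π b))

def MP (u : Grid h h) : Prop :=
  (∀ t : Fin h, (t : ℕ) = u.2.val → u.1.val ≤ ((π.symm t : Fin h) : ℕ)) ∧
  (∀ s : Fin h, (s : ℕ) = u.1.val → u.2.val ≤ ((π s : Fin h) : ℕ))

theorem mx_mem_M (a) : MP h π (gridMx h π a) := by
  by_contra hc
  rw [MP, not_and_or] at hc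
  set u := gridMx h π a with hu
  rcases hc with hc | hc
  · push_neg at hc
    obtain ⟨t, ht, hlt⟩ := hc
    have hedge := beta_up_col h π u t ht (by omega)
    have hle : (u.1, (((t : ℕ) + 1 : ℕ) : Fin (h + 1))) ≤ u := by
      rw [hu]
      exact le_mx h π (beta_trans h π (beta_mx h π a) hedge)
    have := hle.2
    rw [Fin.le_def, Fin.val_cast_of_lt (by omega : (t:ℕ)+1 < h+1)] at this
    omega
  · push_neg at hc
    obtain ⟨s, hs, hlt⟩ := hc
    have hedge := beta_up_row h π u s hs (by omega)
    have hle : ((((s : ℕ) + 1 : ℕ) : Fin (h + 1)), u.2) ≤ u := by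
      rw [hu]
      exact le_mx h π (beta_trans h π (beta_mx h π a) hedge)
    have := hle.1
    rw [Fin.le_def, Fin.val_cast_of_lt (by omega : (s:ℕ)+1 < h+1)] at this
    omega

theorem M_down {u : Grid h h} (hu : MP h π u) {v w : Grid h h}
    (hvw : gridBeta h π v w) : v ≤ u ↔ w ≤ u := by
  refine hvw (fun a b => (a ≤ u ↔ b ≤ u)) ⟨⟨fun _ => Iff.rfl, fun h => h.symm,
    fun h1 h2 => h1.trans h2⟩, fun a b c hab => by simp only []; rw [sup_le_iff, sup_le_iff]; simp only [] at hab; rw [hab]⟩ ?_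
  rintro x y ⟨s, hcg⟩
  refine hcg (fun a b => (a ≤ u ↔ b ≤ u)) ⟨⟨fun _ => Iff.rfl, fun h => h.symm,
    fun h1 h2 => h1.trans h2⟩, fun a b c hab => by simp only []; rw [sup_le_iff, sup_le_iff]; simp only [] at hab; rw [hab]⟩ ?_
  rintro a b ⟨rfl, ha | ha⟩ <;> subst ha
  · -- a = (i, j-1), b = (i, j), i = s+1, j = π s + 1
    have hi : (s.val + 1 : ℕ) < h + 1 := by omega
    have hj : ((π s).val + 1 : ℕ) < h + 1 := by omega
    have hj' : ((π s).val + 1 - 1 : ℕ) = (π s).val := by omega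
    constructor
    · rintro ⟨h1, h2⟩
      simp only [Fin.le_def, Fin.val_cast_of_lt hi] at h1
      rw [hj'] at h2
      simp only [Fin.le_def, Fin.val_cast_of_lt (by omega : ((π s).val : ℕ) < h + 1)] at h2
      refine ⟨?_, ?_⟩
      · rw [Fin.le_def, Fin.val_cast_of_lt hi]; exact h1
      · rw [Fin.le_def, Fin.val_cast_of_lt hj]
        rcases Nat.lt_or_ge (π s).val u.2.val with hlt | hge
        · omega
        · exfalso
          have heq : ((π s : Fin h) : ℕ) = u.2.val := by omega
          have := hu.1 (π s) heq
          rw [Equiv.symm_apply_apply] at this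
          omega
    · rintro ⟨h1, h2⟩
      refine ⟨h1, ?_⟩
      refine le_trans ?_ h2
      rw [hj', Fin.le_def, Fin.val_cast_of_lt (by omega : ((π s).val : ℕ) < h + 1),
        Fin.val_cast_of_lt hj]
      omega
  · -- a = (i-1, j), b = (i, j)
    have hi : (s.val + 1 : ℕ) < h + 1 := by omega
    have hj : ((π s).val + 1 : ℕ) < h + 1 := by omega
    have hi' : (s.val + 1 - 1 : ℕ) = s.val := by omega
    constructor
    · rintro ⟨h1, h2⟩
      rw [hi'] at h1
      simp only [Fin.le_def, Fin.val_cast_of_lt (by omega : (s.val : ℕ) < h + 1)] at h1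
      simp only [Fin.le_def, Fin.val_cast_of_lt hj] at h2
      refine ⟨?_, ?_⟩
      · rw [Fin.le_def, Fin.val_cast_of_lt hi]
        rcases Nat.lt_or_ge s.val u.1.val with hlt | hge
        · omega
        · exfalso
          have heq : ((s : Fin h) : ℕ) = u.1.val := by omega
          have := hu.2 s heq
          omega
      · rw [Fin.le_def, Fin.val_cast_of_lt hj]; exact h2
    · rintro ⟨h1, h2⟩
      refine ⟨?_, h2⟩
      refine le_trans ?_ h1
      rw [hi', Fin.le_def, Fin.val_cast_of_lt (by omega : (s.val : ℕ) < h + 1),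
        Fin.val_cast_of_lt hi]
      omega

theorem M_mx {u : Grid h h} (hu : MP h π u) : gridMx h π u = u :=
  le_antisymm ((M_down h π hu (beta_mx h π u)).mp le_rfl) (le_mx h π (beta_refl h π u))

open Classical in
noncomputable def Mset : Finset (Grid h h) := Finset.univ.filter (MP h π)

theorem Mset_card : (Mset h π).card = h + 1 + invNum π := by
  classical
  set T : Finset (Fin h × Fin h) :=
    Finset.univ.filter (fun p : Fin h × Fin h => p.1 ≤ p.2 ∧ π p.2 ≤ π p.1) with hT
  set F : Fin h × Fin h → Grid h h :=
    fun p => (p.1.castSucc, (π p.2).castSucc) with hF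
  have hFinj : Function.Injective F := by
    intro p q hpq
    rw [Prod.ext_iff] at hpq ⊢
    obtain ⟨h1, h2⟩ := hpq
    exact ⟨Fin.castSucc_injective _ h1, π.injective (Fin.castSucc_injective _ h2)⟩
  have hMeq : Mset h π = insert (Fin.last h, Fin.last h) (T.image F) := by
    ext u
    simp only [Mset, Finset.mem_filter, Finset.mem_univ, true_and, Finset.mem_insert,
      Finset.mem_image, hT, hF]
    constructor
    · intro hu
      rcases Nat.eq_or_lt_of_le (Nat.le_of_lt_succ u.1.isLt) with h1 | h1
      · left
        have h2 : u.2.val = h := by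
          by_contra h2
          have h2' : u.2.val < h := by omega
          have := hu.1 ⟨u.2.val, h2'⟩ rfl
          have := (π.symm ⟨u.2.val, h2'⟩).isLt
          omega
        have hl1 : (Fin.last h, Fin.last h).1.val = h := rfl
        have hl2 : (Fin.last h, Fin.last h).2.val = h := rfl
        exact Prod.ext (Fin.ext (by omega)) (Fin.ext (by omega))
      · rcases Nat.eq_or_lt_of_le (Nat.le_of_lt_succ u.2.isLt) with h2 | h2
        · left
          exfalso
          have := hu.2 ⟨u.1.val, h1⟩ rfl
          have := (π ⟨u.1.val, h1⟩).isLt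
          omega
        · right
          refine ⟨(⟨u.1.val, h1⟩, π.symm ⟨u.2.val, h2⟩), ?_, ?_⟩
          · simp only [Finset.mem_filter, Finset.mem_univ, true_and]
            constructor
            · have := hu.1 ⟨u.2.val, h2⟩ rfl
              exact this
            · rw [Equiv.apply_symm_apply]
              have := hu.2 ⟨u.1.val, h1⟩ rfl
              exact this
          · rw [Equiv.apply_symm_apply]
            exact Prod.ext (Fin.ext rfl) (Fin.ext rfl)
    · rintro (rfl | ⟨p, hp, rfl⟩)
      · constructor
        · intro t ht; have := t.isLt
          have hl2 : (Fin.last h, Fin.last h).2.val = h := rfl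
          omega
        · intro s hs; have := s.isLt
          have hl1 : (Fin.last h, Fin.last h).1.val = h := rfl
          omega
      · refine ⟨?_, ?_⟩
        · intro t ht
          simp only [Fin.coe_castSucc] at ht
          have ht' : t = π p.2 := Fin.ext ht
          subst ht'
          rw [Equiv.symm_apply_apply]
          simp only [Fin.coe_castSucc]
          exact hp.1
        · intro s hs
          simp only [Fin.coe_castSucc] at hs
          have hs' : s = p.1 := Fin.ext hs
          subst hs'
          simp only [Fin.coe_castSucc]
          exact hp.2
  have hnot : (Fin.last h, Fin.last h) ∉ T.image F := by
    simp only [Finset.mem_image, hF]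
    rintro ⟨p, _, hp⟩
    have := congrArg (fun z => z.1.val) hp
    simp only [Fin.coe_castSucc, Fin.val_last] at this
    have := p.1.isLt
    omega
  have hTcard : T.card = h + invNum π := by
    have hsplit : T = (Finset.univ.filter fun p : Fin h × Fin h => p.1 = p.2) ∪
        (Finset.univ.filter fun p : Fin h × Fin h => p.1 < p.2 ∧ π p.2 < π p.1) := by
      rw [hT, ← Finset.filter_or]
      apply Finset.filter_congr
      intro p _
      constructor
      · rintro ⟨h1, h2⟩
        rcases eq_or_lt_of_le h1 with he | hl
        · exact Or.inl he
        · refine Or.inr ⟨hl, lt_of_le_of_ne h2 ?_⟩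
          intro hc
          exact absurd (π.injective hc) (ne_of_gt hl)
      · rintro (he | ⟨h1, h2⟩)
        · exact ⟨le_of_eq he, le_of_eq (congrArg π he.symm)⟩
        · exact ⟨le_of_lt h1, le_of_lt h2⟩
    have hdisj : Disjoint (Finset.univ.filter fun p : Fin h × Fin h => p.1 = p.2)
        (Finset.univ.filter fun p : Fin h × Fin h => p.1 < p.2 ∧ π p.2 < π p.1) := by
      rw [Finset.disjoint_filter]
      rintro p _ he ⟨hc, _⟩
      exact absurd he (ne_of_lt hc)
    have hdiag : (Finset.univ.filter fun p : Fin h × Fin h => p.1 = p.2).card = h := by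
      have : (Finset.univ.filter fun p : Fin h × Fin h => p.1 = p.2) =
          Finset.univ.image (fun x : Fin h => (x, x)) := by
        ext p
        simp only [Finset.mem_filter, Finset.mem_univ, true_and, Finset.mem_image]
        constructor
        · intro hp; exact ⟨p.1, by rw [Prod.ext_iff]; exact ⟨rfl, hp⟩⟩
        · rintro ⟨x, rfl⟩; rfl
      rw [this, Finset.card_image_of_injective _ (fun x y hxy => (Prod.ext_iff.mp hxy).1),
        Finset.card_univ, Fintype.card_fin]
    rw [hsplit, Finset.card_union_of_disjoint hdisj, hdiag, invNum]
  rw [hMeq, Finset.card_insert_of_notMem hnot, Finset.card_image_of_injective _ hFinj,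
    hTcard]
  omega

end Main


/-- For a permutation `π` of `{1,…,h}` (encoded on `Fin h`, the element `s` standing
for `s.val + 1`), the join `β` of the join-congruences `cg(i, π(i))`, `1 ≤ i ≤ h`, of
the grid `K_{h,h}` has exactly `h + 1 + inv(π)` equivalence classes. -/
theorem card_grid_quotient_perm (h : ℕ) (π : Equiv.Perm (Fin h)) :
    Set.ncard {C : Set (Grid h h) |
        ∃ a, C = {b |
          joinCongSup (fun s : Fin h => cg h h (s.val + 1) ((π s).val + 1)) a b}} =
      h + 1 + invNum π := by
  classical
  have hset : {C : Set (Grid h h) | ∃ a, C = {b | gridBeta h π a b}} =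
      (fun u => {b | gridBeta h π u b}) '' ↑(Mset h π) := by
    ext C
    constructor
    · rintro ⟨a, rfl⟩
      refine ⟨gridMx h π a, ?_, ?_⟩
      · simp only [Mset, Finset.coe_filter, Finset.mem_univ, true_and, Set.mem_setOf_eq]
        exact mx_mem_M h π a
      · show {b | gridBeta h π (gridMx h π a) b} = {b | gridBeta h π a b}
        ext b
        simp only [Set.mem_setOf_eq]
        constructor
        · intro hb; exact beta_trans h π (beta_mx h π a) hb
        · intro hb; exact beta_trans h π (beta_symm h π (beta_mx h π a)) hb
    · rintro ⟨u, _, rfl⟩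
      exact ⟨u, rfl⟩
  have hinj : Set.InjOn (fun u => {b | gridBeta h π u b}) ↑(Mset h π) := by
    intro u hu v hv huv
    simp only [Mset, Finset.coe_filter, Finset.mem_univ, true_and, Set.mem_setOf_eq] at hu hv
    have h1 : gridBeta h π v u := by
      have huv' : {b | gridBeta h π u b} = {b | gridBeta h π v b} := huv
      have : u ∈ {b | gridBeta h π u b} := beta_refl h π u
      rw [huv'] at this
      exact this
    exact le_antisymm ((M_down h π hv h1).mp le_rfl)
      ((M_down h π hu (beta_symm h π h1)).mp le_rfl)
  show Set.ncard {C : Set (Grid h h) | ∃ a, C = {b | gridBeta h π a b}} = h + 1 + invNum π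
  rw [hset, Set.ncard_image_of_injOn hinj, Set.ncard_coe_finset, Mset_card]
end

section
/- Let m, n ≥ 1, 1 ≤ i ≤ m, 1 ≤ j ≤ n, and let α = cg(i,j) be the join-congruence of the grid K_{m,n} generated by the pairs ((i,j−1),(i,j)) and ((i−1,j),(i,j)). Then for distinct elements a, b of K_{m,n}, the pair (a,b) belongs to α if and only if one of the following holds: (1) both a and b lie in {(i,j−1), (i−1,j), (i,j)}; (2) there is s with i < s ≤ m such that {a,b} = {(s,j−1), (s,j)}; (3) there is t with j < t ≤ n such that {a,b} = {(i−1,t), (i,t)}. In particular, the α-class of (i,j) is {(i,j−1), (i−1,j), (i,j)}, the sets in (2) and (3) are the two-element α-classes, and all other α-classes are singletons. -/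
open Fin.NatCast

/-! ### Auxiliary lemmas -/

lemma joinCongGen_isJoinCong {α : Type*} [SemilatticeSup α] (R : α → α → Prop) :
    IsJoinCong (joinCongGen R) :=
  ⟨⟨fun a r hr _ => hr.1.refl a,
    fun h r hr hR => hr.1.symm (h r hr hR),
    fun h1 h2 r hr hR => hr.1.trans (h1 r hr hR) (h2 r hr hR)⟩,
    fun a b c h r hr hR => hr.2 a b c (h r hr hR)⟩

lemma joinCongGen_base {α : Type*} [SemilatticeSup α] {R : α → α → Prop} {a b : α}
    (h : R a b) : joinCongGen R a b := fun _ _ hR => hR _ _ h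

def lab (i j x y : ℕ) : ℕ × ℕ :=
  if y = j - 1 ∧ i ≤ x then (x, j)
  else if x = i - 1 ∧ j ≤ y then (i, y)
  else (x, y)

set_option maxHeartbeats 1000000 in
lemma labA (i j : ℕ) (hi : 1 ≤ i) (hj : 1 ≤ j) (s c1 c2 : ℕ) (hs : i ≤ s) :
    lab i j (max s c1) (max (j-1) c2) = lab i j (max s c1) (max j c2) := by
  unfold lab; split_ifs <;> rw [Prod.mk.injEq] <;> omega

set_option maxHeartbeats 1000000 in
lemma labB (i j : ℕ) (hi : 1 ≤ i) (hj : 1 ≤ j) (t c1 c2 : ℕ) (ht : j ≤ t) :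
    lab i j (max (i-1) c1) (max t c2) = lab i j (max i c1) (max t c2) := by
  unfold lab; split_ifs <;> rw [Prod.mk.injEq] <;> omega

set_option maxHeartbeats 1000000 in
lemma lab_eq_cases (i j : ℕ) (hi : 1 ≤ i) (hj : 1 ≤ j)
    (x1 y1 x2 y2 : ℕ) (hne : ¬(x1 = x2 ∧ y1 = y2))
    (h : lab i j x1 y1 = lab i j x2 y2) :
    (((x1 = i ∧ y1 = j - 1) ∨ (x1 = i - 1 ∧ y1 = j) ∨ (x1 = i ∧ y1 = j)) ∧
     ((x2 = i ∧ y2 = j - 1) ∨ (x2 = i - 1 ∧ y2 = j) ∨ (x2 = i ∧ y2 = j))) ∨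
    (i < x1 ∧ x2 = x1 ∧ ((y1 = j - 1 ∧ y2 = j) ∨ (y1 = j ∧ y2 = j - 1))) ∨
    (j < y1 ∧ y2 = y1 ∧ ((x1 = i - 1 ∧ x2 = i) ∨ (x1 = i ∧ x2 = i - 1))) := by
  unfold lab at h
  split_ifs at h <;> rw [Prod.mk.injEq] at h <;>
  first
    | (exfalso; omega)
    | (refine Or.inl ⟨?_, ?_⟩ <;> omega)
    | (refine Or.inr (Or.inl ?_); omega)
    | (refine Or.inr (Or.inr ?_); omega)
    | (rcases Nat.lt_or_ge i x1 with hx | hx <;>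
        first
          | (refine Or.inr (Or.inl ?_); omega)
          | (refine Or.inl ⟨?_, ?_⟩ <;> omega)
          | (exfalso; omega))
    | (rcases Nat.lt_or_ge j y1 with hy | hy <;>
        first
          | (refine Or.inr (Or.inr ?_); omega)
          | (refine Or.inl ⟨?_, ?_⟩ <;> omega)
          | (exfalso; omega))

set_option maxHeartbeats 1000000 in
lemma lab_sup (i j : ℕ) (hi : 1 ≤ i) (hj : 1 ≤ j)
    (x1 y1 x2 y2 c1 c2 : ℕ) (h : lab i j x1 y1 = lab i j x2 y2) :
    lab i j (max x1 c1) (max y1 c2) = lab i j (max x2 c1) (max y2 c2) := by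
  by_cases hne : x1 = x2 ∧ y1 = y2
  · rw [hne.1, hne.2]
  · rcases lab_eq_cases i j hi hj x1 y1 x2 y2 hne h with ⟨h1, h2⟩ | ⟨h1, h2, h3⟩ | ⟨h1, h2, h3⟩
    · have key : ∀ x y : ℕ, (x = i ∧ y = j - 1) ∨ (x = i - 1 ∧ y = j) ∨ (x = i ∧ y = j) →
          lab i j (max x c1) (max y c2) = lab i j (max i c1) (max j c2) := by
        rintro x y (⟨hx, hy⟩ | ⟨hx, hy⟩ | ⟨hx, hy⟩) <;> rw [hx, hy]
        · exact labA i j hi hj i c1 c2 le_rfl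
        · exact labB i j hi hj j c1 c2 le_rfl
      rw [key _ _ h1, key _ _ h2]
    · rcases h3 with ⟨hy1, hy2⟩ | ⟨hy1, hy2⟩ <;> rw [h2, hy1, hy2]
      · exact labA i j hi hj x1 c1 c2 (le_of_lt h1)
      · exact (labA i j hi hj x1 c1 c2 (le_of_lt h1)).symm
    · rcases h3 with ⟨hx1, hx2⟩ | ⟨hx1, hx2⟩ <;> rw [h2, hx1, hx2]
      · exact labB i j hi hj y1 c1 c2 (le_of_lt h1)
      · exact (labB i j hi hj y1 c1 c2 (le_of_lt h1)).symm

set_option maxHeartbeats 1000000 in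
lemma lab_eq_of_cases (i j : ℕ) (hi : 1 ≤ i) (hj : 1 ≤ j)
    (x1 y1 x2 y2 : ℕ)
    (h : (((x1 = i ∧ y1 = j - 1) ∨ (x1 = i - 1 ∧ y1 = j) ∨ (x1 = i ∧ y1 = j)) ∧
     ((x2 = i ∧ y2 = j - 1) ∨ (x2 = i - 1 ∧ y2 = j) ∨ (x2 = i ∧ y2 = j))) ∨
    (i < x1 ∧ x2 = x1 ∧ ((y1 = j - 1 ∧ y2 = j) ∨ (y1 = j ∧ y2 = j - 1))) ∨
    (j < y1 ∧ y2 = y1 ∧ ((x1 = i - 1 ∧ x2 = i) ∨ (x1 = i ∧ x2 = i - 1)))) :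
    lab i j x1 y1 = lab i j x2 y2 := by
  unfold lab
  rcases h with ⟨h1 | h1 | h1, h2 | h2 | h2⟩ | ⟨h1, h2, h3 | h3⟩ | ⟨h1, h2, h3 | h3⟩ <;>
    split_ifs <;> rw [Prod.mk.injEq] <;> omega

/-- the explicit relation on the grid -/
def rrel (m n i j : ℕ) (a b : Grid m n) : Prop :=
  lab i j a.1.1 a.2.1 = lab i j b.1.1 b.2.1

lemma rrel_isJoinCong (m n i j : ℕ) (hi : 1 ≤ i) (hj : 1 ≤ j) :
    IsJoinCong (rrel m n i j) := by
  refine ⟨⟨fun _ => rfl, Eq.symm, Eq.trans⟩, fun a b c h => ?_⟩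
  show lab i j (max a.1.1 c.1.1) (max a.2.1 c.2.1) = lab i j (max b.1.1 c.1.1) (max b.2.1 c.2.1)
  exact lab_sup i j hi hj _ _ _ _ _ _ h

lemma grid_eq_iff {m n : ℕ} (a : Grid m n) (p q : ℕ) (hp : p ≤ m) (hq : q ≤ n) :
    a = ((p : Fin (m+1)), (q : Fin (n+1))) ↔ a.1.1 = p ∧ a.2.1 = q := by
  rw [Prod.ext_iff, Fin.ext_iff, Fin.ext_iff, Fin.val_natCast, Fin.val_natCast,
    Nat.mod_eq_of_lt (by omega), Nat.mod_eq_of_lt (by omega)]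

lemma grid_sup_eq {m n : ℕ} (p1 q1 p2 q2 : ℕ) (hp1 : p1 ≤ m) (hp2 : p2 ≤ m)
    (hq1 : q1 ≤ n) (hq2 : q2 ≤ n) :
    ((((p1 : Fin (m+1)), (q1 : Fin (n+1))) : Grid m n) ⊔ ((p2 : Fin (m+1)), (q2 : Fin (n+1))))
      = (((max p1 p2 : ℕ) : Fin (m+1)), ((max q1 q2 : ℕ) : Fin (n+1))) := by
  rw [grid_eq_iff _ _ _ (by omega) (by omega)]
  have hv1 : ((p1 : Fin (m+1)) : ℕ) = p1 := by rw [Fin.val_natCast]; exact Nat.mod_eq_of_lt (by omega)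
  have hv2 : ((p2 : Fin (m+1)) : ℕ) = p2 := by rw [Fin.val_natCast]; exact Nat.mod_eq_of_lt (by omega)
  have hw1 : ((q1 : Fin (n+1)) : ℕ) = q1 := by rw [Fin.val_natCast]; exact Nat.mod_eq_of_lt (by omega)
  have hw2 : ((q2 : Fin (n+1)) : ℕ) = q2 := by rw [Fin.val_natCast]; exact Nat.mod_eq_of_lt (by omega)
  constructor
  · show max ((p1 : Fin (m+1)) : ℕ) ((p2 : Fin (m+1)) : ℕ) = _
    rw [hv1, hv2]
  · show max ((q1 : Fin (n+1)) : ℕ) ((q2 : Fin (n+1)) : ℕ) = _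
    rw [hw1, hw2]

lemma cg_gen1 (m n i j : ℕ) :
    cg m n i j ((i : Fin (m + 1)), ((j - 1 : ℕ) : Fin (n + 1)))
      ((i : Fin (m + 1)), (j : Fin (n + 1))) :=
  joinCongGen_base ⟨rfl, Or.inl rfl⟩

lemma cg_gen2 (m n i j : ℕ) :
    cg m n i j (((i - 1 : ℕ) : Fin (m + 1)), (j : Fin (n + 1)))
      ((i : Fin (m + 1)), (j : Fin (n + 1))) :=
  joinCongGen_base ⟨rfl, Or.inr rfl⟩

lemma cg_isJoinCong (m n i j : ℕ) : IsJoinCong (cg m n i j) :=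
  joinCongGen_isJoinCong _

lemma cg_col (m n i j : ℕ) (hi : 1 ≤ i) (him : i ≤ m) (hj : 1 ≤ j) (hjn : j ≤ n)
    (s : ℕ) (his : i ≤ s) (hsm : s ≤ m) :
    cg m n i j ((s : Fin (m + 1)), ((j - 1 : ℕ) : Fin (n + 1)))
      ((s : Fin (m + 1)), (j : Fin (n + 1))) := by
  have h := (cg_isJoinCong m n i j).2 _ _ (((s : ℕ) : Fin (m + 1)), ((0 : ℕ) : Fin (n + 1)))
    (cg_gen1 m n i j)
  rwa [grid_sup_eq i (j-1) s 0 him hsm (by omega) (by omega),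
    grid_sup_eq i j s 0 him hsm hjn (by omega),
    show max i s = s by omega, show max (j-1) 0 = j-1 by omega,
    show max j 0 = j by omega] at h

lemma cg_row (m n i j : ℕ) (hi : 1 ≤ i) (him : i ≤ m) (hj : 1 ≤ j) (hjn : j ≤ n)
    (t : ℕ) (hjt : j ≤ t) (htn : t ≤ n) :
    cg m n i j (((i - 1 : ℕ) : Fin (m + 1)), (t : Fin (n + 1)))
      ((i : Fin (m + 1)), (t : Fin (n + 1))) := by
  have h := (cg_isJoinCong m n i j).2 _ _ (((0 : ℕ) : Fin (m + 1)), ((t : ℕ) : Fin (n + 1)))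
    (cg_gen2 m n i j)
  rwa [grid_sup_eq (i-1) j 0 t (by omega) (by omega) hjn htn,
    grid_sup_eq i j 0 t him (by omega) hjn htn,
    show max (i-1) 0 = i-1 by omega, show max i 0 = i by omega,
    show max j t = t by omega] at h

lemma cg_to_rrel (m n i j : ℕ) (hm : 1 ≤ m) (hn : 1 ≤ n)
    (hi : 1 ≤ i) (him : i ≤ m) (hj : 1 ≤ j) (hjn : j ≤ n)
    (a b : Grid m n) (h : cg m n i j a b) : rrel m n i j a b := by
  have hvi : ((i : Fin (m+1)) : ℕ) = i := by
    rw [Fin.val_natCast]; exact Nat.mod_eq_of_lt (by omega)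
  have hvi' : (((i-1 : ℕ) : Fin (m+1)) : ℕ) = i - 1 := by
    rw [Fin.val_natCast]; exact Nat.mod_eq_of_lt (by omega)
  have hvj : ((j : Fin (n+1)) : ℕ) = j := by
    rw [Fin.val_natCast]; exact Nat.mod_eq_of_lt (by omega)
  have hvj' : (((j-1 : ℕ) : Fin (n+1)) : ℕ) = j - 1 := by
    rw [Fin.val_natCast]; exact Nat.mod_eq_of_lt (by omega)
  refine h (rrel m n i j) (rrel_isJoinCong m n i j hi hj) ?_
  rintro x y ⟨rfl, rfl | rfl⟩ <;>
    · show lab i j _ _ = lab i j _ _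
      rw [hvi, hvj]
      first
        | rw [hvj']
        | rw [hvi']
      unfold lab; split_ifs <;> rw [Prod.mk.injEq] <;> omega

set_option maxHeartbeats 1000000 in
/-- Description of the join-congruence `α = cg(i,j)` of the grid `K_{m,n}`
(for `1 ≤ i ≤ m`, `1 ≤ j ≤ n`): for distinct `a, b`, `(a,b) ∈ α` iff
(1) both lie in `{(i,j−1),(i−1,j),(i,j)}`, or
(2) `{a,b} = {(s,j−1),(s,j)}` for some `i < s ≤ m`, or
(3) `{a,b} = {(i−1,t),(i,t)}` for some `j < t ≤ n`.
In particular, the `α`-class of `(i,j)` is `{(i,j−1),(i−1,j),(i,j)}`. -/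
theorem cg_description (m n i j : ℕ) (hm : 1 ≤ m) (hn : 1 ≤ n)
    (hi1 : 1 ≤ i) (him : i ≤ m) (hj1 : 1 ≤ j) (hjn : j ≤ n) :
    (∀ a b : Grid m n, a ≠ b →
      (cg m n i j a b ↔
        (({a, b} : Set (Grid m n)) ⊆
            {((i : Fin (m + 1)), ((j - 1 : ℕ) : Fin (n + 1))),
              (((i - 1 : ℕ) : Fin (m + 1)), (j : Fin (n + 1))),
              ((i : Fin (m + 1)), (j : Fin (n + 1)))} ∨
          (∃ s : ℕ, i < s ∧ s ≤ m ∧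
            ({a, b} : Set (Grid m n)) =
              {((s : Fin (m + 1)), ((j - 1 : ℕ) : Fin (n + 1))),
                ((s : Fin (m + 1)), (j : Fin (n + 1)))}) ∨
          (∃ t : ℕ, j < t ∧ t ≤ n ∧
            ({a, b} : Set (Grid m n)) =
              {(((i - 1 : ℕ) : Fin (m + 1)), (t : Fin (n + 1))),
                ((i : Fin (m + 1)), (t : Fin (n + 1)))})))) ∧
    {b : Grid m n | cg m n i j ((i : Fin (m + 1)), (j : Fin (n + 1))) b} =
      {((i : Fin (m + 1)), ((j - 1 : ℕ) : Fin (n + 1))),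
        (((i - 1 : ℕ) : Fin (m + 1)), (j : Fin (n + 1))),
        ((i : Fin (m + 1)), (j : Fin (n + 1)))} := by
  have hJC := cg_isJoinCong m n i j
  have hvi : ((i : Fin (m+1)) : ℕ) = i := by
    rw [Fin.val_natCast]; exact Nat.mod_eq_of_lt (by omega)
  have hvj : ((j : Fin (n+1)) : ℕ) = j := by
    rw [Fin.val_natCast]; exact Nat.mod_eq_of_lt (by omega)
  have memT : ∀ c : Grid m n,
      ((c.1.1 = i ∧ c.2.1 = j - 1) ∨ (c.1.1 = i - 1 ∧ c.2.1 = j) ∨ (c.1.1 = i ∧ c.2.1 = j)) →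
      c ∈ ({((i : Fin (m + 1)), ((j - 1 : ℕ) : Fin (n + 1))),
              (((i - 1 : ℕ) : Fin (m + 1)), (j : Fin (n + 1))),
              ((i : Fin (m + 1)), (j : Fin (n + 1)))} : Set (Grid m n)) := by
    intro c hc
    simp only [Set.mem_insert_iff, Set.mem_singleton_iff]
    rcases hc with hc | hc | hc
    · exact Or.inl ((grid_eq_iff c i (j-1) him (by omega)).mpr hc)
    · exact Or.inr (Or.inl ((grid_eq_iff c (i-1) j (by omega) hjn).mpr hc))
    · exact Or.inr (Or.inr ((grid_eq_iff c i j him hjn).mpr hc))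
  have toIJ : ∀ c : Grid m n,
      (c = ((i : Fin (m + 1)), ((j - 1 : ℕ) : Fin (n + 1))) ∨
       c = (((i - 1 : ℕ) : Fin (m + 1)), (j : Fin (n + 1))) ∨
       c = ((i : Fin (m + 1)), (j : Fin (n + 1)))) →
      cg m n i j c ((i : Fin (m + 1)), (j : Fin (n + 1))) := by
    rintro c (rfl | rfl | rfl)
    · exact cg_gen1 m n i j
    · exact cg_gen2 m n i j
    · exact hJC.1.refl _
  have main : ∀ a b : Grid m n, a ≠ b →
      (cg m n i j a b ↔
        (({a, b} : Set (Grid m n)) ⊆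
            {((i : Fin (m + 1)), ((j - 1 : ℕ) : Fin (n + 1))),
              (((i - 1 : ℕ) : Fin (m + 1)), (j : Fin (n + 1))),
              ((i : Fin (m + 1)), (j : Fin (n + 1)))} ∨
          (∃ s : ℕ, i < s ∧ s ≤ m ∧
            ({a, b} : Set (Grid m n)) =
              {((s : Fin (m + 1)), ((j - 1 : ℕ) : Fin (n + 1))),
                ((s : Fin (m + 1)), (j : Fin (n + 1)))}) ∨
          (∃ t : ℕ, j < t ∧ t ≤ n ∧
            ({a, b} : Set (Grid m n)) =
              {(((i - 1 : ℕ) : Fin (m + 1)), (t : Fin (n + 1))),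
                ((i : Fin (m + 1)), (t : Fin (n + 1)))}))) := by
    intro a b hab
    constructor
    · intro h
      have hr := cg_to_rrel m n i j hm hn hi1 him hj1 hjn a b h
      have hne : ¬(a.1.1 = b.1.1 ∧ a.2.1 = b.2.1) := by
        rintro ⟨h1, h2⟩
        exact hab (Prod.ext_iff.mpr ⟨Fin.ext h1, Fin.ext h2⟩)
      rcases lab_eq_cases i j hi1 hj1 _ _ _ _ hne hr with ⟨h1, h2⟩ | ⟨h1, h2, h3⟩ | ⟨h1, h2, h3⟩
      · exact Or.inl (Set.insert_subset_iff.mpr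
          ⟨memT a h1, Set.singleton_subset_iff.mpr (memT b h2)⟩)
      · refine Or.inr (Or.inl ⟨a.1.1, h1, Nat.lt_succ_iff.mp a.1.isLt, ?_⟩)
        rcases h3 with ⟨hy1, hy2⟩ | ⟨hy1, hy2⟩
        · exact Set.pair_eq_pair_iff.mpr (Or.inl
            ⟨(grid_eq_iff a a.1.1 (j-1) (Nat.lt_succ_iff.mp a.1.isLt) (by omega)).mpr ⟨rfl, hy1⟩,
             (grid_eq_iff b a.1.1 j (Nat.lt_succ_iff.mp a.1.isLt) hjn).mpr ⟨h2, hy2⟩⟩)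
        · exact Set.pair_eq_pair_iff.mpr (Or.inr
            ⟨(grid_eq_iff a a.1.1 j (Nat.lt_succ_iff.mp a.1.isLt) hjn).mpr ⟨rfl, hy1⟩,
             (grid_eq_iff b a.1.1 (j-1) (Nat.lt_succ_iff.mp a.1.isLt) (by omega)).mpr ⟨h2, hy2⟩⟩)
      · refine Or.inr (Or.inr ⟨a.2.1, h1, Nat.lt_succ_iff.mp a.2.isLt, ?_⟩)
        rcases h3 with ⟨hx1, hx2⟩ | ⟨hx1, hx2⟩
        · exact Set.pair_eq_pair_iff.mpr (Or.inl
            ⟨(grid_eq_iff a (i-1) a.2.1 (by omega) (Nat.lt_succ_iff.mp a.2.isLt)).mpr ⟨hx1, rfl⟩,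
             (grid_eq_iff b i a.2.1 him (Nat.lt_succ_iff.mp a.2.isLt)).mpr ⟨hx2, h2⟩⟩)
        · exact Set.pair_eq_pair_iff.mpr (Or.inr
            ⟨(grid_eq_iff a i a.2.1 him (Nat.lt_succ_iff.mp a.2.isLt)).mpr ⟨hx1, rfl⟩,
             (grid_eq_iff b (i-1) a.2.1 (by omega) (Nat.lt_succ_iff.mp a.2.isLt)).mpr ⟨hx2, h2⟩⟩)
    · intro hd
      rcases hd with hsub | ⟨s, hs1, hs2, hset⟩ | ⟨t, ht1, ht2, hset⟩
      · rw [Set.insert_subset_iff, Set.singleton_subset_iff] at hsub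
        obtain ⟨haT, hbT⟩ := hsub
        simp only [Set.mem_insert_iff, Set.mem_singleton_iff] at haT hbT
        exact hJC.1.trans (toIJ a haT) (hJC.1.symm (toIJ b hbT))
      · rcases Set.pair_eq_pair_iff.mp hset with ⟨ha, hb⟩ | ⟨ha, hb⟩
        · rw [ha, hb]; exact cg_col m n i j hi1 him hj1 hjn s (le_of_lt hs1) hs2
        · rw [ha, hb]; exact hJC.1.symm (cg_col m n i j hi1 him hj1 hjn s (le_of_lt hs1) hs2)
      · rcases Set.pair_eq_pair_iff.mp hset with ⟨ha, hb⟩ | ⟨ha, hb⟩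
        · rw [ha, hb]; exact cg_row m n i j hi1 him hj1 hjn t (le_of_lt ht1) ht2
        · rw [ha, hb]; exact hJC.1.symm (cg_row m n i j hi1 him hj1 hjn t (le_of_lt ht1) ht2)
  refine ⟨main, ?_⟩
  ext b
  simp only [Set.mem_setOf_eq, Set.mem_insert_iff, Set.mem_singleton_iff]
  constructor
  · intro h
    by_cases hb : ((i : Fin (m + 1)), (j : Fin (n + 1))) = b
    · exact Or.inr (Or.inr hb.symm)
    · rcases (main _ b hb).mp h with hsub | ⟨s, hs1, hs2, hset⟩ | ⟨t, ht1, ht2, hset⟩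
      · have := hsub (Set.mem_insert_iff.mpr (Or.inr rfl))
        simpa only [Set.mem_insert_iff, Set.mem_singleton_iff] using this
      · exfalso
        have hmem : ((i : Fin (m + 1)), (j : Fin (n + 1))) ∈
            ({((s : Fin (m + 1)), ((j - 1 : ℕ) : Fin (n + 1))),
              ((s : Fin (m + 1)), (j : Fin (n + 1)))} : Set (Grid m n)) :=
          hset ▸ Set.mem_insert _ _
        simp only [Set.mem_insert_iff, Set.mem_singleton_iff] at hmem
        rcases hmem with h' | h'
        · have := ((grid_eq_iff _ s (j-1) hs2 (by omega)).mp h').1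
          rw [show (((i : Fin (m + 1)), (j : Fin (n + 1))) : Grid m n).1.1
            = ((i : Fin (m+1)) : ℕ) from rfl, hvi] at this
          omega
        · have := ((grid_eq_iff _ s j hs2 hjn).mp h').1
          rw [show (((i : Fin (m + 1)), (j : Fin (n + 1))) : Grid m n).1.1
            = ((i : Fin (m+1)) : ℕ) from rfl, hvi] at this
          omega
      · exfalso
        have hmem : ((i : Fin (m + 1)), (j : Fin (n + 1))) ∈
            ({(((i - 1 : ℕ) : Fin (m + 1)), (t : Fin (n + 1))),
              ((i : Fin (m + 1)), (t : Fin (n + 1)))} : Set (Grid m n)) :=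
          hset ▸ Set.mem_insert _ _
        simp only [Set.mem_insert_iff, Set.mem_singleton_iff] at hmem
        rcases hmem with h' | h'
        · have := ((grid_eq_iff _ (i-1) t (by omega) ht2).mp h').2
          rw [show (((i : Fin (m + 1)), (j : Fin (n + 1))) : Grid m n).2.1
            = ((j : Fin (n+1)) : ℕ) from rfl, hvj] at this
          omega
        · have := ((grid_eq_iff _ i t him ht2).mp h').2
          rw [show (((i : Fin (m + 1)), (j : Fin (n + 1))) : Grid m n).2.1
            = ((j : Fin (n+1)) : ℕ) from rfl, hvj] at this
          omega
  · rintro (rfl | rfl | rfl)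
    · exact hJC.1.symm (cg_gen1 m n i j)
    · exact hJC.1.symm (cg_gen2 m n i j)
    · exact hJC.1.refl _
end
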